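/- Let P, Q ∈ ℂ[X] be nonzero coprime polynomials. Then the function z ↦ |W(P,Q)(z)|² / (|P(z)|² + |Q(z)|²)² is Lebesgue integrable on ℝ² ≅ ℂ and ∫_{ℝ²} |W(P,Q)(z)|² / (|P(z)|² + |Q(z)|²)² dz = π · max(deg P, deg Q). Equivalently, with f := W(P,Q) and ψ_{P,Q} := log 8 − 2·log(|P|² + |Q|²), one has ∫_{ℝ²} |f|²·e^{ψ_{P,Q}} = 8π · max(deg P, deg Q). -/

import Mathlib

set_option maxHeartbeats 1000000

open MeasureTheory Polynomial
open scoped ENNReal NNReal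

/-- The Wronskian W(P,Q) = P'·Q − P·Q'. -/
noncomputable def Wr (P Q : Polynomial ℂ) : Polynomial ℂ :=
  P.derivative * Q - P * Q.derivative

lemma det_restrict (c : ℂ) :
    (((1 : ℂ →L[ℂ] ℂ).smulRight c).restrictScalars ℝ).det = Complex.normSq c := by
  have h : ((((1 : ℂ →L[ℂ] ℂ).smulRight c).restrictScalars ℝ) : ℂ →ₗ[ℝ] ℂ)
      = Algebra.lmul ℝ ℂ c := by
    apply LinearMap.ext
    intro x
    simp [mul_comm]
  rw [ContinuousLinearMap.det, h, ← Algebra.norm_apply, Algebra.norm_complex_apply]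

lemma integral_radial : ∫ r in Set.Ioi (0:ℝ), r / (1 + r ^ 2) ^ 2 = 1 / 2 := by
  have hderiv : ∀ x ∈ Set.Ioi (0:ℝ), HasDerivAt (fun r : ℝ => -(1 / (2 * (1 + r ^ 2))))
      (x / (1 + x ^ 2) ^ 2) x := by
    intro x _
    have h1 : (1 : ℝ) + x ^ 2 ≠ 0 := by positivity
    have h0 : HasDerivAt (fun r : ℝ => 2 * (1 + r ^ 2)) (2 * (2 * x)) x := by
      simpa using ((hasDerivAt_pow 2 x).const_add 1).const_mul 2
    have h3 : HasDerivAt (fun r : ℝ => (2 * (1 + r ^ 2))⁻¹)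
        (-(2 * (2 * x)) / (2 * (1 + x ^ 2)) ^ 2) x := by
      exact h0.inv (by positivity)
    have := h3.neg
    simp only [one_div]
    refine this.congr_deriv ?_
    field_simp
  have hcont : ContinuousWithinAt (fun r : ℝ => -(1 / (2 * (1 + r ^ 2)))) (Set.Ici 0) 0 := by
    apply Continuous.continuousWithinAt
    apply Continuous.neg
    apply Continuous.div continuous_const
    · continuity
    · intro r; positivity
  have hpos : ∀ x ∈ Set.Ioi (0:ℝ), 0 ≤ x / (1 + x ^ 2) ^ 2 := fun x hx => by
    have : (0:ℝ) < x := hx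
    positivity
  have htend : Filter.Tendsto (fun r : ℝ => -(1 / (2 * (1 + r ^ 2)))) Filter.atTop (nhds 0) := by
    rw [show (0:ℝ) = -0 by ring]
    apply Filter.Tendsto.neg
    simp only [one_div]
    apply Filter.Tendsto.inv_tendsto_atTop
    apply Filter.Tendsto.const_mul_atTop (by norm_num : (0:ℝ) < 2)
    apply Filter.tendsto_atTop_add_const_left
    exact Filter.tendsto_pow_atTop (by norm_num)
  have := integral_Ioi_of_hasDerivAt_of_nonneg hcont (fun x hx => hderiv x hx) hpos htend
  rw [this]
  norm_num

lemma integrable_g : Integrable (fun w : ℂ => 1 / (1 + ‖w‖ ^ 2) ^ 2) := by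
  have hbound : Integrable (fun w : ℂ => (1 + ‖w‖) ^ (-(3:ℝ))) := by
    apply integrable_one_add_norm (by norm_num)
  apply Integrable.mono' (hbound.const_mul 3)
  · apply Continuous.aestronglyMeasurable
    apply Continuous.div continuous_const
    · continuity
    · intro w; positivity
  · filter_upwards with w
    have h0 : (0:ℝ) ≤ ‖w‖ := norm_nonneg w
    have habs : ‖w‖ = ‖w‖ := rfl
    rw [habs, Real.norm_eq_abs, abs_of_nonneg (by positivity)]
    rw [Real.rpow_neg (by positivity)]
    rw [show ((3:ℝ)) = ((3:ℕ):ℝ) by norm_num, Real.rpow_natCast]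
    rw [one_div, inv_le_iff_one_le_mul₀ (by positivity)]
    have key : (1 + ‖w‖) ^ 3 ≤ 3 * (1 + ‖w‖ ^ 2) ^ 2 := by
      nlinarith [sq_nonneg (‖w‖ - 1), sq_nonneg ‖w‖, sq_nonneg (‖w‖^2 - ‖w‖)]
    calc (1:ℝ) = ((1 + ‖w‖) ^ 3)⁻¹ * (1 + ‖w‖) ^ 3 := by
                field_simp
      _ ≤ ((1 + ‖w‖) ^ 3)⁻¹ * (3 * (1 + ‖w‖ ^ 2) ^ 2) := by
                apply mul_le_mul_of_nonneg_left key (by positivity)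
      _ = ↑3 * ((1 + ‖w‖) ^ 3)⁻¹ * (1 + ‖w‖ ^ 2) ^ 2 := by ring

lemma integral_g : ∫ w : ℂ, 1 / (1 + ‖w‖ ^ 2) ^ 2 = Real.pi := by
  rw [← Complex.integral_comp_polarCoord_symm (fun w => 1 / (1 + ‖w‖ ^ 2) ^ 2)]
  rw [polarCoord_target]
  have hcongr : ∫ p in Set.Ioi (0:ℝ) ×ˢ Set.Ioo (-Real.pi) Real.pi,
      p.1 • (1 / (1 + ‖Complex.polarCoord.symm p‖ ^ 2) ^ 2)
      = ∫ p in Set.Ioi (0:ℝ) ×ˢ Set.Ioo (-Real.pi) Real.pi,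
        (p.1 / (1 + p.1 ^ 2) ^ 2) * (1 : ℝ) := by
    apply setIntegral_congr_fun (measurableSet_Ioi.prod measurableSet_Ioo)
    intro p hp
    simp only [Complex.norm_polarCoord_symm, smul_eq_mul, sq_abs, mul_one]
    ring
  rw [hcongr, Measure.volume_eq_prod, ← Measure.prod_restrict,
    integral_prod_mul (fun r : ℝ => r / (1 + r ^ 2) ^ 2) (fun _ : ℝ => (1:ℝ)),
    integral_radial, integral_const, measureReal_restrict_apply_univ,
    Real.volume_real_Ioo_of_le (by linarith [Real.pi_pos] : -Real.pi ≤ Real.pi),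
    smul_eq_mul, mul_one]
  ring

lemma lintegral_g : ∫⁻ w : ℂ, ENNReal.ofReal (1 / (1 + ‖w‖ ^ 2) ^ 2)
    = ENNReal.ofReal Real.pi := by
  rw [← integral_g, ← ofReal_integral_eq_lintegral_ofReal integrable_g]
  filter_upwards with w
  positivity

lemma poly_hasDerivAt (P Q : Polynomial ℂ) {z : ℂ} (hz : Q.eval z ≠ 0) :
    HasDerivAt (fun z => P.eval z / Q.eval z)
      ((Wr P Q).eval z / Q.eval z ^ 2) z := by
  have := (P.hasDerivAt z).div (Q.hasDerivAt z) hz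
  simp only [Wr, eval_sub, eval_mul]; exact this

lemma loc_inj (P Q : Polynomial ℂ) {a : ℂ} (hQa : Q.eval a ≠ 0)
    (hWa : (Wr P Q).eval a ≠ 0) :
    ∃ U : Set ℂ, IsOpen U ∧ a ∈ U ∧
      Set.InjOn (fun z => P.eval z / Q.eval z) U := by
  set f : ℂ → ℂ := fun z => P.eval z / Q.eval z with hf
  set c : ℂ := (Wr P Q).eval a / Q.eval a ^ 2 with hc
  have hcne : c ≠ 0 := div_ne_zero hWa (pow_ne_zero 2 hQa)
  have hDerivAt : HasDerivAt f c a := poly_hasDerivAt P Q hQa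
  have hopen : IsOpen {z : ℂ | Q.eval z ≠ 0} :=
    isOpen_compl_iff.mpr (isClosed_eq (Q.continuous_aeval) continuous_const)
  have hAnalytic : AnalyticAt ℂ f a := by
    have hdiff : DifferentiableOn ℂ f {z : ℂ | Q.eval z ≠ 0} := by
      intro z hz
      exact ((poly_hasDerivAt P Q hz).differentiableAt).differentiableWithinAt
    exact (hdiff.analyticAt (hopen.mem_nhds hQa))
  have hstrict : HasStrictFDerivAt f (fderiv ℂ f a) a := hAnalytic.hasStrictFDerivAt
  have hfd : fderiv ℂ f a = ContinuousLinearMap.smulRight (1 : ℂ →L[ℂ] ℂ) c :=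
    hDerivAt.hasFDerivAt.fderiv
  set e : ℂ ≃L[ℂ] ℂ := ContinuousLinearEquiv.unitsEquivAut ℂ (Units.mk0 c hcne) with he
  have hee : (e : ℂ →L[ℂ] ℂ) = ContinuousLinearMap.smulRight (1 : ℂ →L[ℂ] ℂ) c := by
    apply ContinuousLinearMap.ext
    intro x
    simp [he, ContinuousLinearEquiv.unitsEquivAut, smul_eq_mul, mul_comm]
  have hstrict' : HasStrictFDerivAt f (e : ℂ →L[ℂ] ℂ) a := by
    rw [hee, ← hfd]; exact hstrict
  set φ := hstrict'.toOpenPartialHomeomorph f with hφ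
  refine ⟨φ.source, φ.open_source, ?_, ?_⟩
  · exact hstrict'.mem_toOpenPartialHomeomorph_source
  · have : (φ : ℂ → ℂ) = f := hstrict'.toOpenPartialHomeomorph_coe
    rw [← this]
    exact φ.injOn

lemma eval_not_both_zero {P Q : Polynomial ℂ} (hco : IsCoprime P Q) (z : ℂ) :
    ¬(P.eval z = 0 ∧ Q.eval z = 0) := by
  obtain ⟨a, b, hab⟩ := hco
  rintro ⟨h1, h2⟩
  have := congrArg (Polynomial.eval z) hab
  simp [h1, h2] at this

lemma Wr_ne_zero {P Q : Polynomial ℂ} (hP : P ≠ 0) (hQ : Q ≠ 0) (hco : IsCoprime P Q)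
    (hd : 1 ≤ max P.natDegree Q.natDegree) : Wr P Q ≠ 0 := by
  intro h
  have heq : P.derivative * Q = P * Q.derivative := by
    have := sub_eq_zero.mp h
    exact this
  have hdvd : P ∣ P.derivative * Q := ⟨Q.derivative, heq⟩
  have hPP' : P ∣ P.derivative := hco.dvd_of_dvd_mul_right hdvd
  have hP' : P.derivative = 0 := by
    by_contra hne
    have h1 : P.degree ≤ P.derivative.degree := Polynomial.degree_le_of_dvd hPP' hne
    have h2 : P.derivative.degree < P.degree := Polynomial.degree_derivative_lt hP
    exact absurd (lt_of_le_of_lt h1 h2) (lt_irrefl _)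
  have hQ' : Q.derivative = 0 := by
    rw [hP', zero_mul] at heq
    rcases mul_eq_zero.mp heq.symm with h | h
    · exact absurd h hP
    · exact h
  have h1 : P.natDegree = 0 := Polynomial.natDegree_eq_zero_of_derivative_eq_zero hP'
  have h2 : Q.natDegree = 0 := Polynomial.natDegree_eq_zero_of_derivative_eq_zero hQ'
  rw [h1, h2] at hd
  simp at hd

lemma fiber_count (P Q : Polynomial ℂ) (hP : P ≠ 0) (hQ : Q ≠ 0) (hco : IsCoprime P Q)
    (hd : 1 ≤ max P.natDegree Q.natDegree) :
    ∃ B : Set ℂ, B.Finite ∧ ∀ w ∉ B, ∃ s : Finset ℂ,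
      s.card = max P.natDegree Q.natDegree ∧
      ∀ z : ℂ, z ∈ s ↔ (Q.eval z ≠ 0 ∧ (Wr P Q).eval z ≠ 0 ∧ P.eval z / Q.eval z = w) := by
  set d := max P.natDegree Q.natDegree with hdd
  have hW : Wr P Q ≠ 0 := Wr_ne_zero hP hQ hco hd
  have hQP : Q.coeff d = 0 → P.coeff d ≠ 0 := by
    intro hq
    have hQd : Q.natDegree ≠ d := by
      intro h
      rw [← h] at hq
      exact (Polynomial.leadingCoeff_ne_zero.mpr hQ) hq
    have hPd : P.natDegree = d := by
      rcases max_cases P.natDegree Q.natDegree with ⟨h1, _⟩ | ⟨h1, _⟩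
      · exact h1.symm
      · exact absurd h1.symm hQd
    rw [← hPd]
    exact Polynomial.leadingCoeff_ne_zero.mpr hP
  refine ⟨((fun z => P.eval z / Q.eval z) '' {z | (Wr P Q).IsRoot z}) ∪
    {w | P.coeff d - w * Q.coeff d = 0}, ?_, ?_⟩
  · apply Set.Finite.union
    · exact ((Polynomial.finite_setOf_isRoot hW).image _)
    · apply Set.Subsingleton.finite
      intro w1 h1 w2 h2
      simp only [Set.mem_setOf_eq, sub_eq_zero] at h1 h2
      by_cases hqc : Q.coeff d = 0
      · rw [hqc, mul_zero] at h1
        exact absurd h1 (hQP hqc)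
      · exact mul_right_cancel₀ hqc (h1.symm.trans h2)
  · intro w hw
    rw [Set.mem_union, not_or] at hw
    obtain ⟨hw1, hw2⟩ := hw
    set R : Polynomial ℂ := P - Polynomial.C w * Q with hR
    have hroot_basic : ∀ z : ℂ, R.eval z = 0 → (Q.eval z ≠ 0 ∧ P.eval z = w * Q.eval z) := by
      intro z hz
      simp only [hR, Polynomial.eval_sub, Polynomial.eval_mul, Polynomial.eval_C,
        sub_eq_zero] at hz
      constructor
      · intro hQz
        apply eval_not_both_zero hco z
        exact ⟨by rw [hz, hQz, mul_zero], hQz⟩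
      · exact hz
    have hWz_img : ∀ z : ℂ, R.eval z = 0 → (Wr P Q).eval z = 0 → False := by
      intro z hz hWz
      obtain ⟨hQz, hPz⟩ := hroot_basic z hz
      apply hw1
      refine ⟨z, hWz, ?_⟩
      show P.eval z / Q.eval z = w
      rw [hPz]
      field_simp
    have hRd : R.natDegree = d := by
      apply le_antisymm
      · calc R.natDegree ≤ max P.natDegree (Polynomial.C w * Q).natDegree :=
              Polynomial.natDegree_sub_le _ _
          _ ≤ max P.natDegree Q.natDegree :=
              max_le_max (le_refl _) (Polynomial.natDegree_C_mul_le w Q)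
          _ = d := rfl
      · apply Polynomial.le_natDegree_of_ne_zero
        rw [show R.coeff d = P.coeff d - w * Q.coeff d by
          simp [hR, Polynomial.coeff_C_mul]]
        exact hw2
    have hR0 : R ≠ 0 := by
      intro h
      rw [h, Polynomial.natDegree_zero] at hRd
      omega
    have hcard : Multiset.card R.roots = d := by
      have := (IsAlgClosed.splits R).natDegree_eq_card_roots
      omega
    have hnodup : R.roots.Nodup := by
      rw [Multiset.nodup_iff_count_le_one]
      intro z
      rw [Polynomial.count_roots]
      by_contra hcount
      push_neg at hcount
      have h2le : 1 < R.rootMultiplicity z := hcount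
      have hz : R.eval z = 0 := by
        have : 0 < R.rootMultiplicity z := by omega
        exact ((Polynomial.rootMultiplicity_pos hR0).mp this)
      have hz' : (Polynomial.derivative R).eval z = 0 := by
        have := Polynomial.isRoot_iterate_derivative_of_lt_rootMultiplicity
          (p := R) (t := z) (n := 1) h2le
        simpa using this
      obtain ⟨hQz, hPz⟩ := hroot_basic z hz
      have hR' : Polynomial.derivative R = Polynomial.derivative P
          - Polynomial.C w * Polynomial.derivative Q := by
        simp [hR]
      rw [hR'] at hz'
      simp only [Polynomial.eval_sub, Polynomial.eval_mul, Polynomial.eval_C,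
        sub_eq_zero] at hz'
      apply hWz_img z hz
      simp only [Wr, Polynomial.eval_sub, Polynomial.eval_mul]
      rw [hz', hPz]
      ring
    refine ⟨R.roots.toFinset, ?_, ?_⟩
    · rw [Multiset.toFinset_card_of_nodup hnodup, hcard]
    · intro z
      rw [Multiset.mem_toFinset, Polynomial.mem_roots hR0]
      constructor
      · intro hz
        obtain ⟨hQz, hPz⟩ := hroot_basic z hz
        refine ⟨hQz, ?_, by rw [hPz]; field_simp⟩
        intro hWz
        exact hWz_img z hz hWz
      · rintro ⟨hQz, _, hfz⟩
        have : P.eval z = w * Q.eval z := by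
          rw [div_eq_iff hQz] at hfz
          exact hfz
        simp [hR, Polynomial.IsRoot, this]

/-- For nonzero coprime complex polynomials P, Q, the function
z ↦ |W(P,Q)(z)|² / (|P(z)|² + |Q(z)|²)² is Lebesgue integrable on ℝ² ≅ ℂ with
integral π · max(deg P, deg Q). -/
theorem stmt1 (P Q : Polynomial ℂ) (hP : P ≠ 0) (hQ : Q ≠ 0) (hco : IsCoprime P Q) :
    Integrable (fun z : ℂ =>
      ‖(Wr P Q).eval z‖ ^ 2 /
        (‖P.eval z‖ ^ 2 + ‖Q.eval z‖ ^ 2) ^ 2) ∧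
    ∫ z : ℂ, ‖(Wr P Q).eval z‖ ^ 2 /
        (‖P.eval z‖ ^ 2 + ‖Q.eval z‖ ^ 2) ^ 2
      = Real.pi * (max P.natDegree Q.natDegree : ℝ) := by
  set d := max P.natDegree Q.natDegree with hdd
  set hreal : ℂ → ℝ := fun z =>
    ‖(Wr P Q).eval z‖ ^ 2 /
      (‖P.eval z‖ ^ 2 + ‖Q.eval z‖ ^ 2) ^ 2 with hhreal
  have hS : ∀ z : ℂ, 0 < ‖P.eval z‖ ^ 2 + ‖Q.eval z‖ ^ 2 := by
    intro z
    rcases Classical.em (P.eval z = 0) with h | h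
    · have hQz : Q.eval z ≠ 0 := fun hq => eval_not_both_zero hco z ⟨h, hq⟩
      have : 0 < ‖Q.eval z‖ ^ 2 := by
        have := norm_pos_iff.mpr hQz
        positivity
      nlinarith [sq_nonneg (‖P.eval z‖)]
    · have : 0 < ‖P.eval z‖ ^ 2 := by
        have := norm_pos_iff.mpr h
        positivity
      nlinarith [sq_nonneg (‖Q.eval z‖)]
  have hcont : Continuous hreal := by
    apply Continuous.div
    · continuity
    · continuity
    · intro z
      exact pow_ne_zero 2 (ne_of_gt (hS z))
  rcases Nat.eq_zero_or_pos d with hd0 | hd1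
  · -- degenerate case: both polynomials constant
    have hP0 : P.natDegree = 0 := by omega
    have hQ0 : Q.natDegree = 0 := by
      have := le_max_right P.natDegree Q.natDegree
      omega
    obtain ⟨a, ha⟩ := Polynomial.natDegree_eq_zero.mp hP0
    obtain ⟨b, hb⟩ := Polynomial.natDegree_eq_zero.mp hQ0
    have hWr0 : Wr P Q = 0 := by
      rw [Wr, ← ha, ← hb]
      simp
    have hfun : hreal = fun _ => (0:ℝ) := by
      funext z
      rw [hhreal]
      simp [hWr0]
    rw [hfun]
    constructor
    · exact integrable_zero _ _ _
    · rw [integral_zero, ← Nat.cast_max, ← hdd, hd0]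
      norm_num
  · -- main case
    have hW : Wr P Q ≠ 0 := Wr_ne_zero hP hQ hco hd1
    set f : ℂ → ℂ := fun z => P.eval z / Q.eval z with hf
    set A : Set ℂ := {z : ℂ | Q.eval z ≠ 0} ∩ {z : ℂ | (Wr P Q).eval z ≠ 0} with hA
    have hmemA : ∀ z : ℂ, z ∈ A ↔ (Q.eval z ≠ 0 ∧ (Wr P Q).eval z ≠ 0) := by
      intro z
      rw [hA, Set.mem_inter_iff, Set.mem_setOf_eq, Set.mem_setOf_eq]
    have hopen_of_poly : ∀ R : Polynomial ℂ, IsOpen {z : ℂ | R.eval z ≠ 0} := by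
      intro R
      exact isOpen_compl_iff.mpr (isClosed_eq R.continuous_aeval continuous_const)
    have hAopen : IsOpen A := (hopen_of_poly Q).inter (hopen_of_poly (Wr P Q))
    have hAc_sub : Aᶜ ⊆ {z : ℂ | (Q * Wr P Q).IsRoot z} := by
      intro z hz
      rw [Set.mem_compl_iff, hmemA] at hz
      push_neg at hz
      show (Q * Wr P Q).eval z = 0
      rw [Polynomial.eval_mul]
      rcases Classical.em (Q.eval z = 0) with h | h
      · rw [h, zero_mul]
      · rw [hz h, mul_zero]
    have hAc_fin : Set.Finite Aᶜ :=
      Set.Finite.subset (Polynomial.finite_setOf_isRoot (mul_ne_zero hQ hW)) hAc_sub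
    have hAc_null : volume Aᶜ = 0 := hAc_fin.measure_zero _
    have hAmem : ∀ᵐ z : ℂ, z ∈ A := by
      rw [ae_iff]
      exact hAc_null
    -- local injectivity cover
    have hcover : ∀ a : A, ∃ U : Set ℂ, IsOpen U ∧ (a:ℂ) ∈ U ∧ U ⊆ A ∧ Set.InjOn f U := by
      intro a
      have ha := (hmemA a).mp a.2
      obtain ⟨U, hUo, haU, hUinj⟩ := loc_inj P Q ha.1 ha.2
      exact ⟨U ∩ A, hUo.inter hAopen, ⟨haU, a.2⟩, Set.inter_subset_right,
        hUinj.mono Set.inter_subset_left⟩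
    choose V hVopen hVmem hVsub hVinj using hcover
    obtain ⟨T, hTc, hTeq⟩ := TopologicalSpace.isOpen_iUnion_countable V hVopen
    have hAeq : ⋃ a, V a = A :=
      subset_antisymm (Set.iUnion_subset fun a => hVsub a)
        (fun z hz => Set.mem_iUnion.mpr ⟨⟨z, hz⟩, hVmem _⟩)
    have hAne : A.Nonempty := by
      have h1 := hAc_fin.infinite_compl
      rw [compl_compl] at h1
      exact h1.nonempty
    have hTne : T.Nonempty := by
      obtain ⟨z, hz⟩ := hAne
      have hz2 : z ∈ ⋃ a ∈ T, V a := by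
        rw [hTeq, hAeq]
        exact hz
      obtain ⟨a, ha, _⟩ := Set.mem_iUnion₂.mp hz2
      exact ⟨a, ha⟩
    obtain ⟨e, he⟩ := hTc.exists_eq_range hTne
    set u : ℕ → Set ℂ := fun n => V (e n) with hu
    have hUnion_u : ⋃ n, u n = A := by
      have h1 : ⋃ n, V (e n) = ⋃ a ∈ Set.range e, V a := Set.biUnion_range.symm
      rw [hu, h1, ← he, hTeq, hAeq]
    set t : ℕ → Set ℂ := fun n => disjointed u n with ht
    have htm : ∀ n, MeasurableSet (t n) :=
      MeasurableSet.disjointed (fun i => (hVopen _).measurableSet)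
    have htd : Pairwise (Function.onFun Disjoint t) := disjoint_disjointed u
    have htu : ⋃ n, t n = A := by
      rw [ht, iUnion_disjointed]
      exact hUnion_u
    have hts : ∀ n, t n ⊆ A := fun n => (disjointed_subset u n).trans (hVsub _)
    have htinj : ∀ n, Set.InjOn f (t n) := fun n => (hVinj (e n)).mono (disjointed_subset u n)
    -- jacobian
    set c : ℂ → ℂ := fun z => (Wr P Q).eval z / (Q.eval z) ^ 2 with hcdef
    set f' : ℂ → ℂ →L[ℝ] ℂ :=
      fun z => ((1 : ℂ →L[ℂ] ℂ).smulRight (c z)).restrictScalars ℝ with hf'def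
    set g : ℂ → ℝ≥0∞ := fun w => ENNReal.ofReal (1 / (1 + ‖w‖ ^ 2) ^ 2) with hg
    have hgmeas : Measurable g := by
      apply ENNReal.measurable_ofReal.comp
      apply Continuous.measurable
      apply Continuous.div continuous_const
      · continuity
      · intro w
        positivity
    have hpointwise : ∀ z ∈ A, ENNReal.ofReal |(f' z).det| * g (f z)
        = ENNReal.ofReal (hreal z) := by
      intro z hz
      obtain ⟨hQz, hWz⟩ := (hmemA z).mp hz
      rw [hf'def]
      simp only []
      rw [det_restrict, abs_of_nonneg (Complex.normSq_nonneg _), hg]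
      simp only []
      rw [← ENNReal.ofReal_mul (Complex.normSq_nonneg _)]
      congr 1
      rw [hhreal]
      simp only []
      have hq : ‖Q.eval z‖ ≠ 0 := norm_ne_zero_iff.mpr hQz
      have habs : Complex.normSq (c z) = ‖(Wr P Q).eval z‖ ^ 2
          / ‖Q.eval z‖ ^ 4 := by
        rw [← Complex.sq_norm, hcdef]
        simp only []
        rw [norm_div, norm_pow]
        rw [div_pow, ← pow_mul]
      have habsf : ‖f z‖ = ‖P.eval z‖ / ‖Q.eval z‖ := by
        rw [hf]
        simp only []
        rw [norm_div]
      rw [habs, habsf]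
      have hSz := hS z
      field_simp
      ring
    have hderivA : ∀ z ∈ A, HasDerivAt f (c z) z := by
      intro z hz
      exact poly_hasDerivAt P Q ((hmemA z).mp hz).1
    have hpiece : ∀ n, ∫⁻ z in t n, ENNReal.ofReal (hreal z) = ∫⁻ w in f '' (t n), g w := by
      intro n
      rw [lintegral_image_eq_lintegral_abs_det_fderiv_mul volume (htm n)
        (fun x hx => ((hderivA x (hts n hx)).hasFDerivAt.restrictScalars ℝ).hasFDerivWithinAt)
        (htinj n) g]
      apply setLIntegral_congr_fun (htm n)
      intro z hz
      exact (hpointwise z (hts n hz)).symm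
    have hfcontA : ∀ n, ContinuousOn f (t n) := by
      intro n z hz
      exact ((hderivA z (hts n hz)).differentiableAt.continuousAt).continuousWithinAt
    have himg_meas : ∀ n, MeasurableSet (f '' t n) :=
      fun n => (htm n).image_of_continuousOn_injOn (hfcontA n) (htinj n)
    -- counting
    obtain ⟨B, hBfin, hBcount⟩ := fiber_count P Q hP hQ hco hd1
    have hcount : ∀ w : ℂ, w ∉ B →
        (∑' n, Set.indicator (f '' t n) (fun _ => (1:ℝ≥0∞)) w) = (d : ℝ≥0∞) := by
      intro w hwB
      obtain ⟨s, hscard, hsmem⟩ := hBcount w hwB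
      have hzA : ∀ z : ℂ, z ∈ s ↔ z ∈ A ∧ f z = w := by
        intro z
        rw [hsmem z, hmemA]
        tauto
      have hterm : ∀ n, Set.indicator (f '' t n) (fun _ => (1:ℝ≥0∞)) w
          = ∑ z ∈ s, Set.indicator (t n) (fun _ => (1:ℝ≥0∞)) z := by
        intro n
        by_cases hwn : w ∈ f '' t n
        · obtain ⟨z0, hz0t, hz0f⟩ := hwn
          have hz0s : z0 ∈ s := (hzA z0).mpr ⟨hts n hz0t, hz0f⟩
          have hwmem : w ∈ f '' t n := ⟨z0, hz0t, hz0f⟩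
          rw [Set.indicator_of_mem hwmem]
          rw [Finset.sum_eq_single z0]
          · rw [Set.indicator_of_mem hz0t]
          · intro z hzs hne
            apply Set.indicator_of_notMem
            intro hzt
            exact hne (htinj n hzt hz0t ((((hzA z).mp hzs).2).trans hz0f.symm))
          · intro h
            exact absurd hz0s h
        · rw [Set.indicator_of_notMem hwn]
          symm
          apply Finset.sum_eq_zero
          intro z hzs
          apply Set.indicator_of_notMem
          intro hzt
          exact hwn ⟨z, hzt, ((hzA z).mp hzs).2⟩
      rw [tsum_congr hterm, Summable.tsum_finsetSum (fun i _ => ENNReal.summable)]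
      have hone : ∀ z ∈ s, (∑' n, Set.indicator (t n) (fun _ => (1:ℝ≥0∞)) z) = 1 := by
        intro z hzs
        have hzA' : z ∈ ⋃ n, t n := by
          rw [htu]
          exact ((hzA z).mp hzs).1
        obtain ⟨n₀, hn₀⟩ := Set.mem_iUnion.mp hzA'
        rw [tsum_eq_single n₀]
        · rw [Set.indicator_of_mem hn₀]
        · intro m hm
          apply Set.indicator_of_notMem
          intro hzm
          exact Set.disjoint_left.mp (htd hm) hzm hn₀
      rw [Finset.sum_congr rfl hone, Finset.sum_const, hscard]
      simp [hdd]
    have hae : ∀ᵐ w : ℂ, (∑' n, Set.indicator (f '' t n) (fun _ => (1:ℝ≥0∞)) w)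
        = (d : ℝ≥0∞) := by
      rw [ae_iff]
      apply measure_mono_null _ (hBfin.measure_zero volume)
      intro w hw
      by_contra hwB
      exact hw (hcount w hwB)
    -- main computation
    have hmain : ∫⁻ z : ℂ, ENNReal.ofReal (hreal z)
        = ENNReal.ofReal (Real.pi * d) := by
      have hrestrict : volume.restrict A = volume :=
        Measure.restrict_eq_self_of_ae_mem hAmem
      calc ∫⁻ z : ℂ, ENNReal.ofReal (hreal z)
          = ∫⁻ z in A, ENNReal.ofReal (hreal z) := by rw [hrestrict]
        _ = ∑' n, ∫⁻ z in t n, ENNReal.ofReal (hreal z) := by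
              rw [← htu]
              exact lintegral_iUnion htm htd _
        _ = ∑' n, ∫⁻ w in f '' t n, g w := tsum_congr hpiece
        _ = ∑' n, ∫⁻ w, Set.indicator (f '' t n) g w := by
              refine tsum_congr fun n => ?_
              rw [lintegral_indicator (himg_meas n) g]
        _ = ∫⁻ w, ∑' n, Set.indicator (f '' t n) g w := by
              refine (lintegral_tsum fun n => ?_).symm
              exact (hgmeas.indicator (himg_meas n)).aemeasurable
        _ = ∫⁻ w, (∑' n, Set.indicator (f '' t n) (fun _ => (1:ℝ≥0∞)) w) * g w := by
              apply lintegral_congr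
              intro w
              rw [← ENNReal.tsum_mul_right]
              apply tsum_congr
              intro n
              by_cases hwn : w ∈ f '' t n
              · rw [Set.indicator_of_mem hwn, Set.indicator_of_mem hwn, one_mul]
              · rw [Set.indicator_of_notMem hwn, Set.indicator_of_notMem hwn, zero_mul]
        _ = ∫⁻ w, (d : ℝ≥0∞) * g w := by
              apply lintegral_congr_ae
              filter_upwards [hae] with w hw
              rw [hw]
        _ = (d : ℝ≥0∞) * ∫⁻ w, g w := lintegral_const_mul _ hgmeas
        _ = ENNReal.ofReal (Real.pi * d) := by
              rw [hg]
              simp only []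
              rw [lintegral_g]
              rw [show ((d : ℕ) : ℝ≥0∞) = ENNReal.ofReal (d : ℝ) by
                rw [ENNReal.ofReal_natCast]]
              rw [← ENNReal.ofReal_mul (by positivity)]
              rw [mul_comm]
    have hnn : 0 ≤ᵐ[volume] hreal := by
      filter_upwards with z
      rw [hhreal]
      positivity
    constructor
    · refine ⟨hcont.aestronglyMeasurable, ?_⟩
      rw [hasFiniteIntegral_iff_ofReal hnn, hmain]
      exact ENNReal.ofReal_lt_top
    · rw [integral_eq_lintegral_of_nonneg_ae hnn hcont.aestronglyMeasurable, hmain,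
        ENNReal.toReal_ofReal (by positivity), ← Nat.cast_max, ← hdd]
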